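/- Let M be a d-dimensional subspace of the space of m×n real matrices and let X₁*,…,X_d* ∈ M be produced by the greedy algorithm. Then for any 1 ≤ ℓ ≤ d and any linearly independent set {X₁,…,X_ℓ} ⊆ M with rank(X₁) ≤ rank(X₂) ≤ ⋯ ≤ rank(X_ℓ), it holds that rank(X_i) ≥ rank(X_i*) for every i = 1,…,ℓ. -/

import Mathlib

/-- `Xs : Fin d → ℝ^{m×n}` is produced by the greedy algorithm for the subspace `M`:
each `Xs ℓ` lies in `M`, the first `ℓ+1` matrices are linearly independent, and `Xs ℓ`
has minimal rank among all `X ∈ M` keeping the first `ℓ` matrices together with `X`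
linearly independent. -/
def GreedyProduced {m n d : ℕ} (M : Submodule ℝ (Matrix (Fin m) (Fin n) ℝ))
    (Xs : Fin d → Matrix (Fin m) (Fin n) ℝ) : Prop :=
  (∀ i, Xs i ∈ M) ∧
  ∀ ℓ : Fin d,
    LinearIndependent ℝ (fun i : Fin (ℓ.1 + 1) => Xs (Fin.castLE ℓ.isLt i)) ∧
    ∀ X ∈ M,
      LinearIndependent ℝ
        (Fin.snoc (fun i : Fin ℓ.1 => Xs (Fin.castLE ℓ.isLt.le i)) X) →
      (Xs ℓ).rank ≤ X.rank

/-- Lemma 1: if `X₁*,…,X_d*` are produced by the greedy algorithm, then for any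
`ℓ ≤ d` and any linearly independent `X₁,…,X_ℓ ∈ M` with nondecreasing ranks,
`rank (X i) ≥ rank (Xstar i)` for all `i`. -/
theorem greedy_rank_le {m n d : ℕ} (M : Submodule ℝ (Matrix (Fin m) (Fin n) ℝ))
    (hM : Module.finrank ℝ M = d)
    (Xstar : Fin d → Matrix (Fin m) (Fin n) ℝ)
    (hgreedy : GreedyProduced M Xstar)
    (ℓ : ℕ) (hℓ1 : 1 ≤ ℓ) (hℓ : ℓ ≤ d)
    (X : Fin ℓ → Matrix (Fin m) (Fin n) ℝ)
    (hXM : ∀ i, X i ∈ M)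
    (hli : LinearIndependent ℝ X)
    (hmono : Monotone fun i => (X i).rank) :
    ∀ i : Fin ℓ, (Xstar (Fin.castLE hℓ i)).rank ≤ (X i).rank := by
  obtain ⟨hmem, hgr⟩ := hgreedy
  intro i
  set i' : Fin d := Fin.castLE hℓ i with hi'
  set f : Fin i'.1 → Matrix (Fin m) (Fin n) ℝ :=
    fun k => Xstar (Fin.castLE i'.isLt.le k) with hf
  -- the first i' greedy matrices are linearly independent
  have hfi : LinearIndependent ℝ f := by
    have h1 := (hgr i').1
    have := h1.comp Fin.castSucc (Fin.castSucc_injective _)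
    convert this using 2
    rfl
  -- find j ≤ i with X j not in span of f
  have hfind : ∃ j : Fin ℓ, j.1 ≤ i.1 ∧ X j ∉ Submodule.span ℝ (Set.range f) := by
    by_contra hc
    push_neg at hc
    have hli2 : LinearIndependent ℝ (fun k : Fin (i.1 + 1) => X (Fin.castLE i.isLt k)) :=
      hli.comp _ (Fin.castLE_injective _)
    have hmem2 : ∀ k : Fin (i.1 + 1),
        X (Fin.castLE i.isLt k) ∈ Submodule.span ℝ (Set.range f) := fun k =>
      hc _ (Nat.lt_succ_iff.mp k.isLt)
    set g : Fin (i.1 + 1) → Submodule.span ℝ (Set.range f) :=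
      fun k => ⟨X (Fin.castLE i.isLt k), hmem2 k⟩ with hg
    have hlig : LinearIndependent ℝ g := by
      apply LinearIndependent.of_comp (Submodule.span ℝ (Set.range f)).subtype
      exact hli2
    have hcard := hlig.fintype_card_le_finrank
    have hle : Module.finrank ℝ (Submodule.span ℝ (Set.range f)) ≤ i.1 := by
      have := finrank_range_le_card (R := ℝ) f
      rw [Fintype.card_fin] at this
      exact this
    simp only [Fintype.card_fin] at hcard
    omega
  obtain ⟨j, hji, hjs⟩ := hfind
  have hsnoc : LinearIndependent ℝ (Fin.snoc f (X j)) :=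
    linearIndependent_fin_snoc.2 ⟨hfi, hjs⟩
  have h2 := (hgr i').2 (X j) (hXM j) hsnoc
  exact h2.trans (hmono (show j ≤ i from hji))
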